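/- Let A be a bounded operator on a complex Hilbert space H, E the spectral measure of |A|, and suppose ⟨E(·)Af, Af⟩ ≪ ⟨E(·)|A|f, |A|f⟩ (absolute continuity of finite Borel measures on ℝ₊) for every f ∈ H. Then A is quasinormal. -/

import Mathlib

open ContinuousLinearMap MeasureTheory

local notation "⟪" x ", " y "⟫" => @inner ℂ _ _ x y

private lemma aux_zero_of_inner {H : Type*} [NormedAddCommGroup H] [InnerProductSpace ℂ H]
    (S : H →L[ℂ] H) (h : ∀ g, ⟪S g, g⟫ = 0) : S = 0 :=
  ContinuousLinearMap.coe_injective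
    (by have h0 := (inner_map_self_eq_zero (S : H →ₗ[ℂ] H)).mp h; ext x; simpa using LinearMap.congr_fun h0 x)

private lemma aux_add_adjoint_zero {H : Type*} [NormedAddCommGroup H] [InnerProductSpace ℂ H]
    [CompleteSpace H] (S : H →L[ℂ] H) (h : ∀ g, (⟪S g, g⟫).re = 0) :
    S + ContinuousLinearMap.adjoint S = 0 := by
  refine aux_zero_of_inner _ fun g => ?_
  have h1 : ⟪ContinuousLinearMap.adjoint S g, g⟫ = starRingEnd ℂ ⟪S g, g⟫ := by
    rw [adjoint_inner_left, ← inner_conj_symm]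
  simp only [ContinuousLinearMap.add_apply, inner_add_left, h1]
  rw [Complex.add_conj]
  simp [h g]

/-- `E` is the spectral measure of the (bounded, positive) operator `D`, together with the
associated family of scalar Borel measures `μ f = ⟨E(·)f, f⟩`. -/
structure IsSpectralMeasure {H : Type*} [NormedAddCommGroup H] [InnerProductSpace ℂ H]
    [CompleteSpace H] (D : H →L[ℂ] H) (E : Set ℝ → H →L[ℂ] H)
    (μ : H → Measure ℝ) : Prop where
  selfadj : ∀ σ : Set ℝ, MeasurableSet σ → ContinuousLinearMap.adjoint (E σ) = E σ
  inter : ∀ σ τ : Set ℝ, MeasurableSet σ → MeasurableSet τ → E σ ∘L E τ = E (σ ∩ τ)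
  univ : E Set.univ = 1
  support_nonneg : E (Set.Iio 0) = 0
  compat : ∀ (f : H) (σ : Set ℝ), MeasurableSet σ → (μ f σ).toReal = (⟪E σ f, f⟫).re
  finite : ∀ f, IsFiniteMeasure (μ f)
  moment_int : ∀ f, Integrable (fun x => x ^ 2) (μ f)
  moment1 : ∀ f : H, (⟪D f, f⟫).re = ∫ x, x ∂(μ f)
  moment2 : ∀ f : H, ‖D f‖ ^ 2 = ∫ x, x ^ 2 ∂(μ f)

/-- If `⟨E(·)Af, Af⟩` is absolutely continuous with respect to `⟨E(·)|A|f, |A|f⟩` for every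
`f` (where `E` is the spectral measure of `|A|`), then `A` is quasinormal:
`U|A| = |A|U` for the polar decomposition `A = U|A|`. -/
theorem quasinormal_of_absolutely_continuous {H : Type*} [NormedAddCommGroup H]
    [InnerProductSpace ℂ H] [CompleteSpace H]
    (A U absA : H →L[ℂ] H)
    (habs_pos : absA.IsPositive)
    (habs_sq : absA ∘L absA = ContinuousLinearMap.adjoint A ∘L A)
    (hU1 : A = U ∘L absA)
    (hU2 : ∀ f, ‖U (absA f)‖ = ‖absA f‖)
    (hU3 : ∀ h, A h = 0 → U h = 0)
    (E : Set ℝ → H →L[ℂ] H) (μ : H → Measure ℝ)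
    (hE : IsSpectralMeasure absA E μ)
    (hac : ∀ (f : H) (σ : Set ℝ), MeasurableSet σ →
      ⟪E σ (absA f), absA f⟫ = 0 → ⟪E σ (A f), A f⟫ = 0) :
    U ∘L absA = absA ∘L U := by
  have hadj : ContinuousLinearMap.adjoint absA = absA := habs_pos.isSelfAdjoint
  have habsinner : ∀ x y : H, ⟪absA x, y⟫ = ⟪x, absA y⟫ := by
    intro x y
    conv_lhs => rw [← hadj]
    exact adjoint_inner_left absA y x
  have hEinner : ∀ σ : Set ℝ, MeasurableSet σ → ∀ x y : H, ⟪E σ x, y⟫ = ⟪x, E σ y⟫ := by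
    intro σ hσ x y
    conv_lhs => rw [← hE.selfadj σ hσ]
    exact adjoint_inner_left (E σ) y x
  have hEE : ∀ σ τ : Set ℝ, MeasurableSet σ → MeasurableSet τ → ∀ x : H,
      E σ (E τ x) = E (σ ∩ τ) x := fun σ τ hσ hτ x => by
    rw [← hE.inter σ τ hσ hτ]; rfl
  have hE0 : E ∅ = (0 : H →L[ℂ] H) := by
    have h := hE.inter (Set.Iio 0) ∅ measurableSet_Iio MeasurableSet.empty
    rw [hE.support_nonneg, Set.inter_empty] at h
    simpa using h.symm
  have hgg : ∀ x : H, ⟪x, x⟫ = ((‖x‖ ^ 2 : ℝ) : ℂ) := fun x => by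
    rw [inner_self_eq_norm_sq_to_K]; norm_num
  have hre2 : ∀ x : H, (⟪x, x⟫).re = ‖x‖ ^ 2 := fun x => by
    rw [hgg x]; exact Complex.ofReal_re _
  have hquad : ∀ σ : Set ℝ, MeasurableSet σ → ∀ g : H,
      ⟪E σ g, g⟫ = ((‖E σ g‖ ^ 2 : ℝ) : ℂ) := by
    intro σ hσ g
    have h1 : E σ (E σ g) = E σ g := by
      have := hEE σ σ hσ hσ g; rwa [Set.inter_self] at this
    calc ⟪E σ g, g⟫ = ⟪E σ (E σ g), g⟫ := by rw [h1]
      _ = ⟪E σ g, E σ g⟫ := hEinner σ hσ (E σ g) g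
      _ = ((‖E σ g‖ ^ 2 : ℝ) : ℂ) := hgg _
  have hμval : ∀ (g : H) (σ : Set ℝ), MeasurableSet σ →
      (μ g σ).toReal = ‖E σ g‖ ^ 2 := by
    intro g σ hσ
    rw [hE.compat g σ hσ, hquad σ hσ g, Complex.ofReal_re]
  have hcompl : ∀ σ : Set ℝ, MeasurableSet σ → E σᶜ = 1 - E σ := by
    intro σ hσ
    have hz : (E σ + E σᶜ - 1 : H →L[ℂ] H) = 0 := by
      refine aux_zero_of_inner _ fun g => ?_
      haveI := hE.finite g
      have hm : ‖E σ g‖ ^ 2 + ‖E σᶜ g‖ ^ 2 = ‖g‖ ^ 2 := by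
        have h1 : (μ g σ).toReal + (μ g σᶜ).toReal = (μ g Set.univ).toReal := by
          rw [← ENNReal.toReal_add (measure_ne_top _ _) (measure_ne_top _ _),
            measure_add_measure_compl hσ]
        have huniv : (μ g Set.univ).toReal = ‖g‖ ^ 2 := by
          rw [hμval g Set.univ MeasurableSet.univ, hE.univ]; simp
        rw [hμval g σ hσ, hμval g σᶜ hσ.compl, huniv] at h1
        exact h1
      simp only [ContinuousLinearMap.sub_apply, ContinuousLinearMap.add_apply,
        ContinuousLinearMap.one_apply, inner_sub_left, inner_add_left]
      rw [hquad σ hσ g, hquad σᶜ hσ.compl g, hgg g, ← hm]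
      push_cast
      ring
    have h1 : E σ + E σᶜ = 1 := sub_eq_zero.mp hz
    exact eq_sub_of_add_eq' h1
  have hsum : ∀ σ : Set ℝ, MeasurableSet σ → ∀ g : H, E σ g + E σᶜ g = g := by
    intro σ hσ g
    rw [hcompl σ hσ]
    simp
  have hintx : ∀ g : H, Integrable (fun x : ℝ => x) (μ g) := by
    intro g
    haveI := hE.finite g
    have h1 : Integrable (fun x : ℝ => 1 + x ^ 2) (μ g) :=
      (integrable_const 1).add (hE.moment_int g)
    refine h1.mono aestronglyMeasurable_id (ae_of_all _ fun x => ?_)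
    have h2 : |x| ≤ 1 + x ^ 2 := by nlinarith [sq_nonneg (|x| - 1), sq_abs x, abs_nonneg x]
    have h3 : (0:ℝ) ≤ 1 + x ^ 2 := by positivity
    simpa [Real.norm_eq_abs, abs_of_nonneg h3] using h2
  have hμE : ∀ (g : H) (σ : Set ℝ), MeasurableSet σ → μ (E σ g) = (μ g).restrict σ := by
    intro g σ hσ
    haveI := hE.finite g; haveI := hE.finite (E σ g)
    refine Measure.ext fun τ hτ => ?_
    rw [Measure.restrict_apply hτ]
    refine (ENNReal.toReal_eq_toReal_iff' (measure_ne_top _ _) (measure_ne_top _ _)).mp ?_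
    rw [hE.compat (E σ g) τ hτ, hE.compat g (τ ∩ σ) (hτ.inter hσ)]
    have key : ⟪E τ (E σ g), E σ g⟫ = ⟪E (τ ∩ σ) g, g⟫ := by
      calc ⟪E τ (E σ g), E σ g⟫ = ⟪E σ (E τ (E σ g)), g⟫ := (hEinner σ hσ _ g).symm
        _ = ⟪E (σ ∩ (τ ∩ σ)) g, g⟫ := by rw [hEE τ σ hτ hσ g, hEE σ (τ ∩ σ) hσ (hτ.inter hσ) g]
        _ = ⟪E (τ ∩ σ) g, g⟫ := by
            rw [Set.inter_eq_self_of_subset_right Set.inter_subset_right]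
    rw [key]
  -- E σ commutes with absA
  have hcross : ∀ σ : Set ℝ, MeasurableSet σ → ∀ g : H,
      (⟪E σᶜ (absA (E σ g)), g⟫).re = 0 := by
    intro σ hσ g
    have m0 := hE.moment1 g
    have mu : (⟪absA (E σ g), E σ g⟫).re = ∫ x in σ, x ∂(μ g) := by
      rw [hE.moment1 (E σ g), hμE g σ hσ]
    have mv : (⟪absA (E σᶜ g), E σᶜ g⟫).re = ∫ x in σᶜ, x ∂(μ g) := by
      rw [hE.moment1 (E σᶜ g), hμE g σᶜ hσ.compl]
    have hsplit := integral_add_compl hσ (hintx g)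
    have hconj : ⟪absA (E σᶜ g), E σ g⟫ = starRingEnd ℂ ⟪absA (E σ g), E σᶜ g⟫ := by
      rw [habsinner (E σ g) (E σᶜ g)]
      exact (inner_conj_symm _ _).symm
    have hexp : ⟪absA g, g⟫ = ⟪absA (E σ g), E σ g⟫ + ⟪absA (E σᶜ g), E σᶜ g⟫ +
        (⟪absA (E σ g), E σᶜ g⟫ + starRingEnd ℂ ⟪absA (E σ g), E σᶜ g⟫) := by
      conv_lhs => rw [← hsum σ hσ g]
      rw [map_add, inner_add_left, inner_add_right, inner_add_right, ← hconj]
      ring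
    have hre := congrArg Complex.re hexp
    simp only [Complex.add_re, Complex.conj_re] at hre
    have hkey : (⟪absA (E σ g), E σᶜ g⟫).re = 0 := by
      rw [mu, mv, m0, ← hsplit] at hre
      linarith
    rw [hEinner σᶜ hσ.compl (absA (E σ g)) g]
    exact hkey
  have hzero1 : ∀ σ : Set ℝ, MeasurableSet σ → ∀ g : H,
      E σᶜ (absA (E σ g)) + E σ (absA (E σᶜ g)) = 0 := by
    intro σ hσ g
    have h0 := aux_add_adjoint_zero (E σᶜ ∘L (absA ∘L E σ))
      (fun x => by simpa using hcross σ hσ x)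
    have hadjS : ContinuousLinearMap.adjoint (E σᶜ ∘L (absA ∘L E σ)) =
        E σ ∘L (absA ∘L E σᶜ) := by
      rw [adjoint_comp, adjoint_comp, hadj, hE.selfadj σ hσ, hE.selfadj σᶜ hσ.compl,
        comp_assoc]
    rw [hadjS] at h0
    have := congrFun (congrArg DFunLike.coe h0) g
    simpa using this
  have hEzero : ∀ σ : Set ℝ, MeasurableSet σ → ∀ h : H, E σᶜ (absA (E σ h)) = 0 := by
    intro σ hσ h
    have h1 := hzero1 σ hσ (E σ h)
    have hid : E σ (E σ h) = E σ h := by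
      have := hEE σ σ hσ hσ h; rwa [Set.inter_self] at this
    have h2 : E σᶜ (E σ h) = 0 := by
      rw [hEE σᶜ σ hσ.compl hσ, Set.compl_inter_self, hE0]
      rfl
    rw [hid, h2, map_zero, map_zero, add_zero] at h1
    exact h1
  have hcomm : ∀ σ : Set ℝ, MeasurableSet σ → ∀ g : H, absA (E σ g) = E σ (absA g) := by
    intro σ hσ g
    have k1 : E σᶜ (absA (E σ g)) = 0 := hEzero σ hσ g
    have k2 : E σ (absA (E σᶜ g)) = 0 := by
      have := hEzero σᶜ hσ.compl g
      rwa [compl_compl] at this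
    calc absA (E σ g) = E σ (absA (E σ g)) + E σᶜ (absA (E σ g)) := (hsum σ hσ _).symm
      _ = E σ (absA (E σ g)) := by rw [k1, add_zero]
      _ = E σ (absA (E σ g)) + E σ (absA (E σᶜ g)) := by rw [k2, add_zero]
      _ = E σ (absA g) := by rw [← map_add, ← map_add, hsum σ hσ g]
  -- ‖A g‖ = ‖absA g‖
  have hAnorm : ∀ g : H, ‖A g‖ = ‖absA g‖ := by
    intro g
    have e2 : ContinuousLinearMap.adjoint A (A g) = absA (absA g) := by
      have := congrFun (congrArg DFunLike.coe habs_sq) g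
      simpa using this.symm
    have h1 : ⟪A g, A g⟫ = ⟪absA g, absA g⟫ := by
      calc ⟪A g, A g⟫ = ⟪ContinuousLinearMap.adjoint A (A g), g⟫ :=
            (adjoint_inner_left A g (A g)).symm
        _ = ⟪absA (absA g), g⟫ := by rw [e2]
        _ = ⟪absA g, absA g⟫ := habsinner (absA g) g
    have hsq : ‖A g‖ ^ 2 = ‖absA g‖ ^ 2 := by
      have := congrArg Complex.re h1
      rwa [hre2, hre2] at this
    calc ‖A g‖ = Real.sqrt (‖A g‖ ^ 2) := (Real.sqrt_sq (norm_nonneg _)).symm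
      _ = Real.sqrt (‖absA g‖ ^ 2) := by rw [hsq]
      _ = ‖absA g‖ := Real.sqrt_sq (norm_nonneg _)
  -- E σ commutes with A
  have hAfix : ∀ σ : Set ℝ, MeasurableSet σ → ∀ g : H, E σᶜ (A (E σ g)) = 0 := by
    intro σ hσ g
    have hpre : ⟪E σᶜ (absA (E σ g)), absA (E σ g)⟫ = 0 := by
      rw [hEzero σ hσ g]
      simp
    have hc := hac (E σ g) σᶜ hσ.compl hpre
    rw [hquad σᶜ hσ.compl (A (E σ g))] at hc
    have h2 : ‖E σᶜ (A (E σ g))‖ ^ 2 = 0 := by exact_mod_cast hc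
    have h3 : ‖E σᶜ (A (E σ g))‖ = 0 :=
      pow_eq_zero_iff (by norm_num : (2:ℕ) ≠ 0) |>.mp h2
    exact norm_eq_zero.mp h3
  have hAfix2 : ∀ σ : Set ℝ, MeasurableSet σ → ∀ g : H,
      A (E σ g) = E σ (A (E σ g)) := by
    intro σ hσ g
    have := hsum σ hσ (A (E σ g))
    rw [hAfix σ hσ g, add_zero] at this
    exact this.symm
  have hAcomm : ∀ σ : Set ℝ, MeasurableSet σ → ∀ g : H, A (E σ g) = E σ (A g) := by
    intro σ hσ g
    have k2 : E σ (A (E σᶜ g)) = 0 := by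
      have h2 := hAfix2 σᶜ hσ.compl g
      rw [h2, hEE σ σᶜ hσ hσ.compl, Set.inter_compl_self, hE0]
      rfl
    calc A (E σ g) = E σ (A (E σ g)) := hAfix2 σ hσ g
      _ = E σ (A (E σ g)) + E σ (A (E σᶜ g)) := by rw [k2, add_zero]
      _ = E σ (A g) := by rw [← map_add, ← map_add, hsum σ hσ g]
  -- μ (A g) = μ (absA g)
  have hmeasA : ∀ g : H, μ (A g) = μ (absA g) := by
    intro g
    haveI := hE.finite (A g); haveI := hE.finite (absA g)
    refine Measure.ext fun σ hσ => ?_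
    refine (ENNReal.toReal_eq_toReal_iff' (measure_ne_top _ _) (measure_ne_top _ _)).mp ?_
    rw [hμval _ σ hσ, hμval _ σ hσ, ← hAcomm σ hσ g, ← hcomm σ hσ g, hAnorm]
  -- A* |A| A = |A|^3
  have hS : ContinuousLinearMap.adjoint A ∘L (absA ∘L A) = absA ∘L (absA ∘L absA) := by
    have hre : ∀ g : H, (⟪(ContinuousLinearMap.adjoint A ∘L (absA ∘L A) -
        absA ∘L (absA ∘L absA)) g, g⟫).re = 0 := by
      intro g
      have e1 : ⟪ContinuousLinearMap.adjoint A (absA (A g)), g⟫ = ⟪absA (A g), A g⟫ :=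
        adjoint_inner_left A g (absA (A g))
      have e2 : ⟪absA (absA (absA g)), g⟫ = ⟪absA (absA g), absA g⟫ :=
        habsinner (absA (absA g)) g
      simp only [ContinuousLinearMap.sub_apply, ContinuousLinearMap.comp_apply,
        inner_sub_left, Complex.sub_re, e1, e2]
      rw [hE.moment1 (A g), hE.moment1 (absA g), hmeasA g, sub_self]
    have h0 := aux_add_adjoint_zero _ hre
    have hsa : ContinuousLinearMap.adjoint (ContinuousLinearMap.adjoint A ∘L (absA ∘L A) -
        absA ∘L (absA ∘L absA)) = ContinuousLinearMap.adjoint A ∘L (absA ∘L A) -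
        absA ∘L (absA ∘L absA) := by
      simp only [map_sub, adjoint_comp, adjoint_adjoint, hadj, comp_assoc]
    rw [hsa] at h0
    have h2 : (2 : ℂ) • (ContinuousLinearMap.adjoint A ∘L (absA ∘L A) -
        absA ∘L (absA ∘L absA)) = 0 := by
      rw [two_smul]; exact h0
    have h1 := (smul_eq_zero.mp h2).resolve_left (by norm_num)
    exact sub_eq_zero.mp h1
  -- A |A| = |A| A
  have hAabs : ∀ f : H, A (absA f) = absA (A f) := by
    intro f
    have n1 : ‖A (absA f)‖ ^ 2 = ‖absA (absA f)‖ ^ 2 := by rw [hAnorm]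
    have n2 : ‖absA (A f)‖ ^ 2 = ‖absA (absA f)‖ ^ 2 := by
      rw [hE.moment2 (A f), hE.moment2 (absA f), hmeasA f]
    have e3 : ⟪A (absA f), absA (A f)⟫ = ((‖absA (absA f)‖ ^ 2 : ℝ) : ℂ) := by
      calc ⟪A (absA f), absA (A f)⟫ = ⟪absA (A (absA f)), A f⟫ :=
            (habsinner (A (absA f)) (A f)).symm
        _ = ⟪ContinuousLinearMap.adjoint A (absA (A (absA f))), f⟫ :=
            (adjoint_inner_left A f (absA (A (absA f)))).symm
        _ = ⟪absA (absA (absA (absA f))), f⟫ := by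
            have := congrFun (congrArg DFunLike.coe hS) (absA f)
            simp only [ContinuousLinearMap.comp_apply] at this
            rw [this]
        _ = ⟪absA (absA (absA f)), absA f⟫ := habsinner _ f
        _ = ⟪absA (absA f), absA (absA f)⟫ := habsinner _ (absA f)
        _ = ((‖absA (absA f)‖ ^ 2 : ℝ) : ℂ) := hgg _
    have n3 : (⟪A (absA f), absA (A f)⟫).re = ‖absA (absA f)‖ ^ 2 := by
      rw [e3]; exact Complex.ofReal_re _
    have key : ‖A (absA f) - absA (A f)‖ ^ 2 = 0 := by
      rw [@norm_sub_sq ℂ]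
      simp only [RCLike.re_to_complex]
      rw [n1, n2, n3]
      ring
    have h4 : ‖A (absA f) - absA (A f)‖ = 0 :=
      pow_eq_zero_iff (by norm_num : (2:ℕ) ≠ 0) |>.mp key
    exact sub_eq_zero.mp (norm_eq_zero.mp h4)
  -- final assembly
  ext f
  simp only [ContinuousLinearMap.comp_apply]
  have hAf : ∀ x : H, A x = U (absA x) := fun x => by rw [hU1]; rfl
  rw [← hAf f]
  haveI : CompleteSpace ((LinearMap.range (absA : H →ₗ[ℂ] H)).topologicalClosure :
      Submodule ℂ H) := (Submodule.isClosed_topologicalClosure _).completeSpace_coe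
  set K := (LinearMap.range (absA : H →ₗ[ℂ] H)).topologicalClosure with hK
  set p : H := (K.orthogonalProjectionOnto f : H) with hp
  have hpK : p ∈ K := (K.orthogonalProjectionOnto f).2
  have hq : f - p ∈ Kᗮ := K.sub_starProjection_mem_orthogonal f
  have habsq : absA (f - p) = 0 := by
    have horth : ∀ x : H, ⟪absA x, f - p⟫ = 0 := fun x =>
      (Submodule.mem_orthogonal K (f - p)).mp hq (absA x)
        (Submodule.le_topologicalClosure _ (LinearMap.mem_range_self _ x))
    have h1 : ⟪absA (f - p), absA (f - p)⟫ = 0 := by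
      rw [← habsinner (absA (f - p)) (f - p)]
      exact horth (absA (f - p))
    exact inner_self_eq_zero.mp h1
  have hAq : A (f - p) = 0 := by
    have := hAnorm (f - p)
    rw [habsq, norm_zero] at this
    exact norm_eq_zero.mp this
  have hUq : U (f - p) = 0 := hU3 _ hAq
  have hgoal_p : ∀ x ∈ K, A x = absA (U x) := by
    have hsubset : LinearMap.range (absA : H →ₗ[ℂ] H) ≤ LinearMap.ker ((A - absA ∘L U : H →L[ℂ] H) : H →ₗ[ℂ] H) := by
      rintro x ⟨y, rfl⟩
      have h5 : A (absA y) - absA (U (absA y)) = 0 := by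
        rw [← hAf y, hAabs y, sub_self]
      simpa [LinearMap.mem_ker, ContinuousLinearMap.sub_apply] using h5
    have hle : K ≤ LinearMap.ker ((A - absA ∘L U : H →L[ℂ] H) : H →ₗ[ℂ] H) := by
      rw [hK]
      exact Submodule.topologicalClosure_minimal _ hsubset (ContinuousLinearMap.isClosed_ker _)
    intro x hx
    have hker := hle hx
    have h6 : A x - absA (U x) = 0 := by
      simpa [LinearMap.mem_ker, ContinuousLinearMap.sub_apply] using hker
    exact sub_eq_zero.mp h6
  calc A f = A (p + (f - p)) := by congr 1; abel
    _ = A p + A (f - p) := by rw [map_add]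
    _ = A p := by rw [hAq, add_zero]
    _ = absA (U p) := hgoal_p p hpK
    _ = absA (U p) + absA (U (f - p)) := by rw [hUq, map_zero, add_zero]
    _ = absA (U (p + (f - p))) := by rw [map_add U, map_add absA]
    _ = absA (U f) := by congr 2; abel
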